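/- For every ℓ ∈ ℕ and every θ ∈ ℝ^ℓ, the following identities hold: Σ_{y∈{−1,1}^ℓ} α(θ,y)⁴ = 2^ℓ·∏_{i=1}^{ℓ}(1+6θᵢ²+θᵢ⁴); Σ_{y∈{−1,1}^ℓ} α(θ,y)³·α(θ,−y) = 2^ℓ·∏_{i=1}^{ℓ}(1−θᵢ⁴); Σ_{y∈{−1,1}^ℓ} α(θ,y)²·α(θ,−y)² = 2^ℓ·∏_{i=1}^{ℓ}(1−2θᵢ²+θᵢ⁴); Σ_{y∈{−1,1}^ℓ} α(θ,y)⁵ = 2^ℓ·∏_{i=1}^{ℓ}(1+10θᵢ²+5θᵢ⁴); Σ_{y∈{−1,1}^ℓ} α(θ,y)⁴·α(θ,−y) = 2^ℓ·∏_{i=1}^{ℓ}(1+2θᵢ²−3θᵢ⁴); and Σ_{y∈{−1,1}^ℓ} α(θ,y)³·α(θ,−y)² = 2^ℓ·∏_{i=1}^{ℓ}(1−2θᵢ²+θᵢ⁴). -/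
import Mathlib


open Finset

theorem moment_identities_high (ℓ : ℕ) (θ : Fin ℓ → ℝ) :
    (∑ y ∈ Fintype.piFinset (fun _ : Fin ℓ => ({-1, 1} : Finset ℝ)),
        (∏ i, (1 + θ i * y i)) ^ 4) = 2 ^ ℓ * ∏ i, (1 + 6 * θ i ^ 2 + θ i ^ 4) ∧
    (∑ y ∈ Fintype.piFinset (fun _ : Fin ℓ => ({-1, 1} : Finset ℝ)),
        (∏ i, (1 + θ i * y i)) ^ 3 * ∏ i, (1 + θ i * (-y i)))
      = 2 ^ ℓ * ∏ i, (1 - θ i ^ 4) ∧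
    (∑ y ∈ Fintype.piFinset (fun _ : Fin ℓ => ({-1, 1} : Finset ℝ)),
        (∏ i, (1 + θ i * y i)) ^ 2 * (∏ i, (1 + θ i * (-y i))) ^ 2)
      = 2 ^ ℓ * ∏ i, (1 - 2 * θ i ^ 2 + θ i ^ 4) ∧
    (∑ y ∈ Fintype.piFinset (fun _ : Fin ℓ => ({-1, 1} : Finset ℝ)),
        (∏ i, (1 + θ i * y i)) ^ 5) = 2 ^ ℓ * ∏ i, (1 + 10 * θ i ^ 2 + 5 * θ i ^ 4) ∧
    (∑ y ∈ Fintype.piFinset (fun _ : Fin ℓ => ({-1, 1} : Finset ℝ)),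
        (∏ i, (1 + θ i * y i)) ^ 4 * ∏ i, (1 + θ i * (-y i)))
      = 2 ^ ℓ * ∏ i, (1 + 2 * θ i ^ 2 - 3 * θ i ^ 4) ∧
    (∑ y ∈ Fintype.piFinset (fun _ : Fin ℓ => ({-1, 1} : Finset ℝ)),
        (∏ i, (1 + θ i * y i)) ^ 3 * (∏ i, (1 + θ i * (-y i))) ^ 2)
      = 2 ^ ℓ * ∏ i, (1 - 2 * θ i ^ 2 + θ i ^ 4) := by
  have key : ∀ g : Fin ℓ → ℝ → ℝ,
      (∑ y ∈ Fintype.piFinset (fun _ : Fin ℓ => ({-1, 1} : Finset ℝ)),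
        ∏ i, g i (y i)) = ∏ i, (g i (-1) + g i 1) := by
    intro g
    rw [← Finset.prod_univ_sum]
    refine Finset.prod_congr rfl fun i _ => ?_
    rw [Finset.sum_pair (by norm_num : (-1 : ℝ) ≠ 1)]
  have pull : ∀ h : Fin ℓ → ℝ, (∏ i, 2 * h i) = 2 ^ ℓ * ∏ i, h i := by
    intro h
    rw [Finset.prod_mul_distrib, Finset.prod_const]
    simp
  refine ⟨?_, ?_, ?_, ?_, ?_, ?_⟩
  · calc (∑ y ∈ Fintype.piFinset (fun _ : Fin ℓ => ({-1, 1} : Finset ℝ)),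
        (∏ i, (1 + θ i * y i)) ^ 4)
        = ∑ y ∈ Fintype.piFinset (fun _ : Fin ℓ => ({-1, 1} : Finset ℝ)),
            ∏ i, (1 + θ i * y i) ^ 4 :=
          Finset.sum_congr rfl fun y _ => (Finset.prod_pow _ _ _).symm
      _ = ∏ i, ((1 + θ i * (-1)) ^ 4 + (1 + θ i * 1) ^ 4) := key (fun i t => (1 + θ i * t) ^ 4)
      _ = ∏ i, 2 * (1 + 6 * θ i ^ 2 + θ i ^ 4) :=
          Finset.prod_congr rfl fun i _ => by ring
      _ = _ := pull _
  · calc (∑ y ∈ Fintype.piFinset (fun _ : Fin ℓ => ({-1, 1} : Finset ℝ)),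
        (∏ i, (1 + θ i * y i)) ^ 3 * ∏ i, (1 + θ i * (-y i)))
        = ∑ y ∈ Fintype.piFinset (fun _ : Fin ℓ => ({-1, 1} : Finset ℝ)),
            ∏ i, (1 + θ i * y i) ^ 3 * (1 + θ i * (-y i)) :=
          Finset.sum_congr rfl fun y _ => by
            rw [← Finset.prod_pow, ← Finset.prod_mul_distrib]
      _ = ∏ i, ((1 + θ i * (-1)) ^ 3 * (1 + θ i * (-(-1))) +
            (1 + θ i * 1) ^ 3 * (1 + θ i * (-1))) := key (fun i t => (1 + θ i * t) ^ 3 * (1 + θ i * (-t)))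
      _ = ∏ i, 2 * (1 - θ i ^ 4) := Finset.prod_congr rfl fun i _ => by ring
      _ = _ := pull _
  · calc (∑ y ∈ Fintype.piFinset (fun _ : Fin ℓ => ({-1, 1} : Finset ℝ)),
        (∏ i, (1 + θ i * y i)) ^ 2 * (∏ i, (1 + θ i * (-y i))) ^ 2)
        = ∑ y ∈ Fintype.piFinset (fun _ : Fin ℓ => ({-1, 1} : Finset ℝ)),
            ∏ i, (1 + θ i * y i) ^ 2 * (1 + θ i * (-y i)) ^ 2 :=
          Finset.sum_congr rfl fun y _ => by
            rw [← Finset.prod_pow, ← Finset.prod_pow, ← Finset.prod_mul_distrib]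
      _ = ∏ i, ((1 + θ i * (-1)) ^ 2 * (1 + θ i * (-(-1))) ^ 2 +
            (1 + θ i * 1) ^ 2 * (1 + θ i * (-1)) ^ 2) := key (fun i t => (1 + θ i * t) ^ 2 * (1 + θ i * (-t)) ^ 2)
      _ = ∏ i, 2 * (1 - 2 * θ i ^ 2 + θ i ^ 4) :=
          Finset.prod_congr rfl fun i _ => by ring
      _ = _ := pull _
  · calc (∑ y ∈ Fintype.piFinset (fun _ : Fin ℓ => ({-1, 1} : Finset ℝ)),
        (∏ i, (1 + θ i * y i)) ^ 5)
        = ∑ y ∈ Fintype.piFinset (fun _ : Fin ℓ => ({-1, 1} : Finset ℝ)),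
            ∏ i, (1 + θ i * y i) ^ 5 :=
          Finset.sum_congr rfl fun y _ => (Finset.prod_pow _ _ _).symm
      _ = ∏ i, ((1 + θ i * (-1)) ^ 5 + (1 + θ i * 1) ^ 5) := key (fun i t => (1 + θ i * t) ^ 5)
      _ = ∏ i, 2 * (1 + 10 * θ i ^ 2 + 5 * θ i ^ 4) :=
          Finset.prod_congr rfl fun i _ => by ring
      _ = _ := pull _
  · calc (∑ y ∈ Fintype.piFinset (fun _ : Fin ℓ => ({-1, 1} : Finset ℝ)),
        (∏ i, (1 + θ i * y i)) ^ 4 * ∏ i, (1 + θ i * (-y i)))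
        = ∑ y ∈ Fintype.piFinset (fun _ : Fin ℓ => ({-1, 1} : Finset ℝ)),
            ∏ i, (1 + θ i * y i) ^ 4 * (1 + θ i * (-y i)) :=
          Finset.sum_congr rfl fun y _ => by
            rw [← Finset.prod_pow, ← Finset.prod_mul_distrib]
      _ = ∏ i, ((1 + θ i * (-1)) ^ 4 * (1 + θ i * (-(-1))) +
            (1 + θ i * 1) ^ 4 * (1 + θ i * (-1))) := key (fun i t => (1 + θ i * t) ^ 4 * (1 + θ i * (-t)))
      _ = ∏ i, 2 * (1 + 2 * θ i ^ 2 - 3 * θ i ^ 4) :=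
          Finset.prod_congr rfl fun i _ => by ring
      _ = _ := pull _
  · calc (∑ y ∈ Fintype.piFinset (fun _ : Fin ℓ => ({-1, 1} : Finset ℝ)),
        (∏ i, (1 + θ i * y i)) ^ 3 * (∏ i, (1 + θ i * (-y i))) ^ 2)
        = ∑ y ∈ Fintype.piFinset (fun _ : Fin ℓ => ({-1, 1} : Finset ℝ)),
            ∏ i, (1 + θ i * y i) ^ 3 * (1 + θ i * (-y i)) ^ 2 :=
          Finset.sum_congr rfl fun y _ => by
            rw [← Finset.prod_pow, ← Finset.prod_pow, ← Finset.prod_mul_distrib]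
      _ = ∏ i, ((1 + θ i * (-1)) ^ 3 * (1 + θ i * (-(-1))) ^ 2 +
            (1 + θ i * 1) ^ 3 * (1 + θ i * (-1)) ^ 2) := key (fun i t => (1 + θ i * t) ^ 3 * (1 + θ i * (-t)) ^ 2)
      _ = ∏ i, 2 * (1 - 2 * θ i ^ 2 + θ i ^ 4) :=
          Finset.prod_congr rfl fun i _ => by ring
      _ = _ := pull _
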